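/- For every integer s ≥ 2, there exists a linear code over GF(4) of length 4s+3, dimension 3s+1, and minimum distance 3 that has locality 3. Since (4s+3) − (3s+1) − ⌈(3s+1)/3⌉ + 2 = 3, such a code is an optimal (4s+3, 3s+1, 3) LRC meeting the Singleton-like bound. -/

import Mathlib

noncomputable def wt {F : Type*} [Zero F] {ι : Type*} (x : ι → F) : ℕ :=
  {i | x i ≠ 0}.ncard

def dualCode {F : Type*} [Field F] {n : ℕ} (C : Submodule F (Fin n → F)) :
    Submodule F (Fin n → F) where
  carrier := {y | ∀ x ∈ C, ∑ i, x i * y i = 0}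
  add_mem' := by
    intro a b ha hb
    simp only [Set.mem_setOf_eq] at *
    intro z hz
    simp [Pi.add_apply, mul_add, Finset.sum_add_distrib, ha z hz, hb z hz]
  zero_mem' := by
    intro z hz
    simp
  smul_mem' := by
    intro c a ha
    simp only [Set.mem_setOf_eq] at *
    intro z hz
    have h : ∀ i, z i * (c • a) i = c * (z i * a i) := by
      intro i; simp [smul_eq_mul]; ring
    simp only [h, ← Finset.mul_sum, ha z hz, mul_zero]

def isMinDist {F : Type*} [Field F] {ι : Type*} (C : Submodule F (ι → F)) (d : ℕ) : Prop :=
  (∃ x ∈ C, x ≠ 0 ∧ wt x = d) ∧ ∀ x ∈ C, x ≠ 0 → d ≤ wt x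

def hasLocality {F : Type*} [Field F] {n : ℕ} (C : Submodule F (Fin n → F)) (r : ℕ) : Prop :=
  ∀ i : Fin n, ∃ h ∈ dualCode C, h i ≠ 0 ∧ wt h ≤ r + 1

abbrev GF4 := GaloisField 2 2

def ceilDiv (a b : ℕ) : ℕ := (a + b - 1) / b

namespace Stmt14

lemma card_gf4 : Nat.card GF4 = 4 := by
  have h := GaloisField.card 2 2 (by norm_num)
  simpa using h

noncomputable def u : Fin 4 → GF4 := (Finite.equivFinOfCardEq card_gf4).symm

lemma u_inj : Function.Injective u := (Finite.equivFinOfCardEq card_gf4).symm.injective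

noncomputable def u' (m : ℕ) : GF4 := u ⟨m % 4, Nat.mod_lt _ (by norm_num)⟩

lemma u'_eq {m m' : ℕ} (h : m % 4 = m' % 4) : u' m = u' m' := by
  unfold u'; congr 1; exact Fin.ext h

lemma u'_ne {m m' : ℕ} (h : ¬ m % 4 = m' % 4) : u' m ≠ u' m' := by
  intro he
  exact h (congrArg Fin.val (u_inj he))

lemma e_ne : u' 1 - u' 0 ≠ 0 := sub_ne_zero.2 (u'_ne (by norm_num))

variable (s : ℕ)

/-- parity check matrix -/
noncomputable def H (r : Fin (s+2)) (i : Fin (4*s+3)) : GF4 :=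
  if r.val = s+1 then u' i.val else if i.val / 4 = r.val then 1 else 0

lemma H_of_ne (r : Fin (s+2)) (hr : ¬ r.val = s+1) (k : Fin (4*s+3)) :
    H s r k = if k.val / 4 = r.val then 1 else 0 := if_neg hr

lemma H_of_eq (r : Fin (s+2)) (hr : r.val = s+1) (k : Fin (4*s+3)) :
    H s r k = u' k.val := if_pos hr

noncomputable def L : (Fin (4*s+3) → GF4) →ₗ[GF4] (Fin (s+2) → GF4) where
  toFun x := fun r => ∑ i, H s r i * x i
  map_add' x y := by
    funext r
    simp [Pi.add_apply, mul_add, Finset.sum_add_distrib]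
  map_smul' c x := by
    funext r
    simp [Finset.mul_sum, mul_left_comm]

noncomputable def C : Submodule GF4 (Fin (4*s+3) → GF4) := LinearMap.ker (L s)

lemma mem_C {x : Fin (4*s+3) → GF4} :
    x ∈ C s ↔ ∀ r, ∑ i, H s r i * x i = 0 := by
  rw [C, LinearMap.mem_ker, funext_iff]
  rfl

lemma wt_eq {n : ℕ} [DecidableEq GF4] (x : Fin n → GF4) :
    wt x = (Finset.univ.filter fun i => x i ≠ 0).card := by
  rw [wt, Set.ncard_eq_toFinset_card', Set.toFinset_setOf]

lemma sum_two {n : ℕ} (i1 i2 : Fin n) (h12 : i1 ≠ i2) (c1 c2 : GF4) (f : Fin n → GF4) :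
    ∑ i, f i * (if i = i1 then c1 else if i = i2 then c2 else 0)
      = f i1 * c1 + f i2 * c2 := by
  classical
  have key : ∀ i, f i * (if i = i1 then c1 else if i = i2 then c2 else 0)
      = (if i = i1 then f i1 * c1 else 0) + (if i = i2 then f i2 * c2 else 0) := by
    intro i
    split_ifs with h1 h2 <;> simp_all
  simp only [key, Finset.sum_add_distrib, Finset.sum_ite_eq', Finset.mem_univ, if_true]

lemma sum_three {n : ℕ} (i1 i2 i3 : Fin n) (h12 : i1 ≠ i2) (h13 : i1 ≠ i3) (h23 : i2 ≠ i3)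
    (c1 c2 c3 : GF4) (f : Fin n → GF4) :
    ∑ i, f i * (if i = i1 then c1 else if i = i2 then c2 else if i = i3 then c3 else 0)
      = f i1 * c1 + f i2 * c2 + f i3 * c3 := by
  classical
  have key : ∀ i, f i * (if i = i1 then c1 else if i = i2 then c2 else if i = i3 then c3 else 0)
      = (if i = i1 then f i1 * c1 else 0) + (if i = i2 then f i2 * c2 else 0)
        + (if i = i3 then f i3 * c3 else 0) := by
    intro i
    split_ifs with h1 h2 h3 <;> simp_all
  simp only [key, Finset.sum_add_distrib, Finset.sum_ite_eq', Finset.mem_univ, if_true]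

/-- preimage vectors hitting standard basis -/
noncomputable def w (r : Fin (s+2)) : Fin (4*s+3) → GF4 :=
  if hr : r.val ≤ s then
    fun i => if i = ⟨4*r.val, by omega⟩ then u' 1 / (u' 1 - u' 0)
      else if i = ⟨4*r.val+1, by omega⟩ then -(u' 0 / (u' 1 - u' 0)) else 0
  else
    fun i => if i = ⟨0, by omega⟩ then -(1 / (u' 1 - u' 0))
      else if i = ⟨1, by omega⟩ then 1 / (u' 1 - u' 0) else 0

lemma Lw (r : Fin (s+2)) : L s (w s r) = Pi.single r 1 := by
  have he : u' 1 - u' 0 ≠ 0 := e_ne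
  have hr2 : r.val < s + 2 := r.isLt
  funext r'
  have hr'2 : r'.val < s + 2 := r'.isLt
  have hL : L s (w s r) r' = ∑ i, H s r' i * w s r i := rfl
  rw [hL, Pi.single_apply]
  by_cases hr : r.val ≤ s
  · rw [w, dif_pos hr, sum_two (n := 4*s+3) ⟨4*r.val, by omega⟩ ⟨4*r.val+1, by omega⟩
      (by simp [Fin.mk.injEq])]
    by_cases hr' : r'.val = s + 1
    · have hne : ¬ (r' = r) := by intro h; subst h; omega
      rw [if_neg hne, H_of_eq s r' hr', H_of_eq s r' hr']
      rw [show u' (⟨4*r.val, by omega⟩ : Fin (4*s+3)).val = u' 0 from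
          u'_eq (by show 4*r.val % 4 = 0 % 4; omega),
        show u' (⟨4*r.val+1, by omega⟩ : Fin (4*s+3)).val = u' 1 from
          u'_eq (by show (4*r.val+1) % 4 = 1 % 4; omega)]
      field_simp
      ring
    · rw [H_of_ne s r' hr', H_of_ne s r' hr']
      rw [show (⟨4*r.val, by omega⟩ : Fin (4*s+3)).val / 4 = r.val from
          by show 4*r.val / 4 = r.val; omega,
        show (⟨4*r.val+1, by omega⟩ : Fin (4*s+3)).val / 4 = r.val from
          by show (4*r.val+1) / 4 = r.val; omega]
      by_cases heq : r.val = r'.val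
      · rw [if_pos heq, if_pos (Fin.ext heq.symm), one_mul, one_mul]
        field_simp
        ring
      · rw [if_neg heq, if_neg (fun h => heq (by rw [h])), zero_mul, zero_mul,
          add_zero]
  · have hrv : r.val = s + 1 := by omega
    rw [w, dif_neg hr, sum_two (n := 4*s+3) ⟨0, by omega⟩ ⟨1, by omega⟩
      (by simp [Fin.mk.injEq])]
    by_cases hr' : r'.val = s + 1
    · rw [if_pos (Fin.ext (by omega)), H_of_eq s r' hr', H_of_eq s r' hr']
      rw [show u' (⟨0, by omega⟩ : Fin (4*s+3)).val = u' 0 from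
          u'_eq (by show 0 % 4 = 0 % 4; omega),
        show u' (⟨1, by omega⟩ : Fin (4*s+3)).val = u' 1 from
          u'_eq (by show 1 % 4 = 1 % 4; omega)]
      field_simp
      ring
    · have hne : ¬ (r' = r) := by intro h; subst h; omega
      rw [if_neg hne, H_of_ne s r' hr', H_of_ne s r' hr']
      rw [show (⟨0, by omega⟩ : Fin (4*s+3)).val / 4 = 0 from by show 0 / 4 = 0; omega,
        show (⟨1, by omega⟩ : Fin (4*s+3)).val / 4 = 0 from by show 1 / 4 = 0; omega]
      by_cases h0 : 0 = r'.val
      · rw [if_pos h0, one_mul, one_mul]; ring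
      · rw [if_neg h0, zero_mul, zero_mul, add_zero]

lemma L_surj : Function.Surjective (L s) := by
  intro y
  refine ⟨∑ r, y r • w s r, ?_⟩
  rw [map_sum]
  simp only [map_smul, Lw]
  funext j
  simp only [Finset.sum_apply, Pi.smul_apply, Pi.single_apply, smul_eq_mul]
  have key : ∀ r : Fin (s+2), y r * (if j = r then (1:GF4) else 0)
      = if j = r then y j else 0 := by
    intro r
    split_ifs with h
    · rw [h, mul_one]
    · rw [mul_zero]
  simp only [key, Finset.sum_ite_eq, Finset.mem_univ, if_true]

lemma finrank_C : Module.finrank GF4 (C s) = 3*s+1 := by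
  have h := LinearMap.finrank_range_add_finrank_ker (L s)
  rw [LinearMap.range_eq_top.2 (L_surj s), finrank_top, Module.finrank_fin_fun,
    Module.finrank_fin_fun] at h
  rw [C]
  omega

/-- a weight-3 codeword -/
noncomputable def z : Fin (4*s+3) → GF4 :=
  fun i => if i = ⟨0, by omega⟩ then u' 2 - u' 1 else if i = ⟨1, by omega⟩ then u' 0 - u' 2
    else if i = ⟨2, by omega⟩ then u' 1 - u' 0 else 0

lemma z_mem : z s ∈ C s := by
  rw [mem_C]
  intro r
  rw [show (∑ i, H s r i * z s i) = ∑ i, H s r i * (if i = ⟨0, by omega⟩ then u' 2 - u' 1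
      else if i = ⟨1, by omega⟩ then u' 0 - u' 2 else if i = ⟨2, by omega⟩ then u' 1 - u' 0
      else 0) from rfl,
    sum_three (n := 4*s+3) ⟨0, by omega⟩ ⟨1, by omega⟩ ⟨2, by omega⟩
      (by simp [Fin.ext_iff]) (by simp [Fin.ext_iff]) (by simp [Fin.ext_iff])]
  by_cases hr : r.val = s+1
  · rw [H_of_eq s r hr, H_of_eq s r hr, H_of_eq s r hr]
    rw [show u' (⟨0, by omega⟩ : Fin (4*s+3)).val = u' 0 from
        u'_eq (by show 0 % 4 = 0 % 4; omega),
      show u' (⟨1, by omega⟩ : Fin (4*s+3)).val = u' 1 from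
        u'_eq (by show 1 % 4 = 1 % 4; omega),
      show u' (⟨2, by omega⟩ : Fin (4*s+3)).val = u' 2 from
        u'_eq (by show 2 % 4 = 2 % 4; omega)]
    ring
  · rw [H_of_ne s r hr, H_of_ne s r hr, H_of_ne s r hr]
    rw [show (⟨0, by omega⟩ : Fin (4*s+3)).val / 4 = 0 from by show 0 / 4 = 0; omega,
      show (⟨1, by omega⟩ : Fin (4*s+3)).val / 4 = 0 from by show 1 / 4 = 0; omega,
      show (⟨2, by omega⟩ : Fin (4*s+3)).val / 4 = 0 from by show 2 / 4 = 0; omega]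
    by_cases h0 : 0 = r.val
    · rw [if_pos h0, one_mul, one_mul, one_mul]; ring
    · rw [if_neg h0, zero_mul, zero_mul, zero_mul]; ring

lemma z_ne : z s ≠ 0 := by
  intro h
  have h0 : z s ⟨0, by omega⟩ = u' 2 - u' 1 := if_pos rfl
  rw [h] at h0
  exact sub_ne_zero.2 (u'_ne (by norm_num)) h0.symm

lemma z_wt : wt (z s) = 3 := by
  classical
  rw [wt_eq]
  have hset : (Finset.univ.filter fun i => z s i ≠ 0)
      = ({⟨0, by omega⟩, ⟨1, by omega⟩, ⟨2, by omega⟩} : Finset (Fin (4*s+3))) := by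
    ext i
    simp only [Finset.mem_filter, Finset.mem_univ, true_and, Finset.mem_insert,
      Finset.mem_singleton]
    simp only [z]
    constructor
    · intro h
      by_contra hc
      push_neg at hc
      rw [if_neg hc.1, if_neg hc.2.1, if_neg hc.2.2] at h
      exact h rfl
    · rintro (rfl | rfl | rfl)
      · rw [if_pos rfl]; exact sub_ne_zero.2 (u'_ne (by norm_num))
      · rw [if_neg (by simp [Fin.ext_iff]), if_pos rfl]
        exact sub_ne_zero.2 (u'_ne (by norm_num))
      · rw [if_neg (by simp [Fin.ext_iff]), if_neg (by simp [Fin.ext_iff]), if_pos rfl]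
        exact sub_ne_zero.2 (u'_ne (by norm_num))
  rw [hset, Finset.card_insert_of_notMem (by simp [Fin.ext_iff]),
    Finset.card_insert_of_notMem (by simp [Fin.ext_iff]), Finset.card_singleton]

lemma dist_lb (x : Fin (4*s+3) → GF4) (hx : x ∈ C s) (hx0 : x ≠ 0) : 3 ≤ wt x := by
  classical
  rw [mem_C] at hx
  by_contra hlt
  push_neg at hlt
  rw [wt_eq] at hlt
  obtain ⟨i, hi⟩ : ∃ i, x i ≠ 0 := by
    by_contra hc; push_neg at hc; exact hx0 (funext hc)
  have hi4 : i.val < 4*s+3 := i.isLt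
  have hglt : i.val / 4 < s+2 := by omega
  have hgrp := hx ⟨i.val / 4, hglt⟩
  have hlast := hx ⟨s+1, by omega⟩
  have hgne : ¬ ((⟨i.val / 4, hglt⟩ : Fin (s+2)).val = s+1) := by
    show ¬ (i.val / 4 = s+1); omega
  -- find a second support coordinate in the same group
  obtain ⟨j, hji, hjg, hxj⟩ : ∃ j : Fin (4*s+3), j ≠ i ∧ j.val / 4 = i.val / 4 ∧ x j ≠ 0 := by
    by_contra hc
    push_neg at hc
    have hsum : ∑ k, H s ⟨i.val / 4, hglt⟩ k * x k = H s ⟨i.val / 4, hglt⟩ i * x i := by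
      apply Finset.sum_eq_single
      · intro b _ hb
        rw [H_of_ne s _ hgne]
        by_cases hbg : b.val / 4 = i.val / 4
        · rw [hc b hb hbg, mul_zero]
        · rw [if_neg hbg, zero_mul]
      · intro hi'; exact absurd (Finset.mem_univ i) hi'
    rw [hgrp, H_of_ne s _ hgne, if_pos rfl, one_mul] at hsum
    exact hi hsum.symm
  have hij : i ≠ j := hji.symm
  have hvanish : ∀ k, k ≠ i → k ≠ j → x k = 0 := by
    intro k hki hkj
    by_contra hk
    have hsub : ({i, j} : Finset (Fin (4*s+3))) ⊆ Finset.univ.filter fun m => x m ≠ 0 := by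
      intro m hm
      simp only [Finset.mem_insert, Finset.mem_singleton] at hm
      rcases hm with rfl | rfl <;> simp [hi, hxj]
    have hcard2 : ({i, j} : Finset (Fin (4*s+3))).card = 2 := by
      rw [Finset.card_insert_of_notMem (by simpa using hij), Finset.card_singleton]
    have hSeq : Finset.univ.filter (fun m => x m ≠ 0) = {i, j} :=
      (Finset.eq_of_subset_of_card_le hsub (by rw [hcard2]; omega)).symm
    have hkS : k ∈ Finset.univ.filter fun m => x m ≠ 0 := by simp [hk]
    rw [hSeq] at hkS
    simp only [Finset.mem_insert, Finset.mem_singleton] at hkS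
    rcases hkS with rfl | rfl
    · exact hki rfl
    · exact hkj rfl
  have reduce : ∀ f : Fin (4*s+3) → GF4, (∑ k, f k * x k) = f i * x i + f j * x j := by
    intro f
    have h1 : ∑ k ∈ ({i, j} : Finset _), f k * x k = ∑ k, f k * x k :=
      Finset.sum_subset (Finset.subset_univ _) (fun k _ hk => by
        simp only [Finset.mem_insert, Finset.mem_singleton, not_or] at hk
        rw [hvanish k hk.1 hk.2, mul_zero])
    rw [← h1, Finset.sum_pair hij]
  have eq1 : x i + x j = 0 := by
    rw [reduce, H_of_ne s _ hgne, H_of_ne s _ hgne, if_pos rfl, if_pos hjg,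
      one_mul, one_mul] at hgrp
    exact hgrp
  have eq2 : u' i.val * x i + u' j.val * x j = 0 := by
    rw [reduce, H_of_eq s _ rfl, H_of_eq s _ rfl] at hlast
    exact hlast
  have hne : u' i.val ≠ u' j.val := by
    apply u'_ne
    have hvne : i.val ≠ j.val := fun h => hij (Fin.ext h)
    have hj4 : j.val < 4*s+3 := j.isLt
    omega
  have hzero : (u' i.val - u' j.val) * x i = 0 := by
    have hxj' : x j = - x i := by linear_combination eq1
    rw [hxj'] at eq2
    linear_combination eq2
  rcases mul_eq_zero.1 hzero with h | h
  · exact hne (sub_eq_zero.1 h)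
  · exact hi h

lemma loc : hasLocality (C s) 3 := by
  classical
  intro i
  have hi4 : i.val < 4*s+3 := i.isLt
  have hglt : i.val / 4 < s+2 := by omega
  have hgne : ¬ ((⟨i.val / 4, hglt⟩ : Fin (s+2)).val = s+1) := by
    show ¬ (i.val / 4 = s+1); omega
  refine ⟨H s ⟨i.val / 4, hglt⟩, ?_, ?_, ?_⟩
  · show ∀ x ∈ C s, ∑ k, x k * H s ⟨i.val / 4, hglt⟩ k = 0
    intro x hx
    rw [mem_C] at hx
    have h := hx ⟨i.val / 4, hglt⟩
    rw [← h]
    exact Finset.sum_congr rfl (fun k _ => mul_comm _ _)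
  · rw [H_of_ne s _ hgne, if_pos rfl]
    exact one_ne_zero
  · rw [wt_eq]
    have hle : (Finset.univ.filter fun k => H s ⟨i.val / 4, hglt⟩ k ≠ 0).card
        ≤ (Finset.univ : Finset (Fin 4)).card := by
      apply Finset.card_le_card_of_injOn (fun k => (⟨k.val % 4, by omega⟩ : Fin 4))
      · intro a _; exact Finset.mem_univ _
      · intro a ha b hb hab
        simp only [Finset.coe_filter, Set.mem_setOf_eq, Finset.mem_univ, true_and] at ha hb
        have ha4 : a.val / 4 = i.val / 4 := by
          by_contra hcon
          exact ha (by rw [H_of_ne s _ hgne, if_neg hcon])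
        have hb4 : b.val / 4 = i.val / 4 := by
          by_contra hcon
          exact hb (by rw [H_of_ne s _ hgne, if_neg hcon])
        rw [Fin.mk.injEq] at hab
        exact Fin.ext (by omega)
    simpa using hle

end Stmt14

/-- for s ≥ 2 there exists an optimal quaternary
(4s+3, 3s+1, 3) LRC with minimum distance 3. -/
theorem stmt_14 (s : ℕ) (hs : 2 ≤ s) :
    ∃ C : Submodule GF4 (Fin (4 * s + 3) → GF4),
      Module.finrank GF4 C = 3 * s + 1 ∧ isMinDist C 3 ∧ hasLocality C 3 := by
  exact ⟨Stmt14.C s, Stmt14.finrank_C s,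
    ⟨⟨Stmt14.z s, Stmt14.z_mem s, Stmt14.z_ne s, Stmt14.z_wt s⟩,
      fun x hx hx0 => Stmt14.dist_lb s x hx hx0⟩, Stmt14.loc s⟩
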